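/- Let f : ℝ^d → ℝ be differentiable with L-Lipschitz gradient, h convex, Ψ = f + h, and 0 < η. Let x ∈ ℝ^d, g = ∇f(x), and x⁺ = prox_{ηh}(x - ηg). Then Ψ(x⁺) ≤ Ψ(x) - (η - Lη²/2)‖P(x, g, η)‖², where P(x, g, η) = (x - x⁺)/η. -/

import Mathlib

open InnerProductSpace Set

set_option maxHeartbeats 1000000 in
theorem stmt5 (d : ℕ) (f h : EuclideanSpace ℝ (Fin d) → ℝ)
    (f' : EuclideanSpace ℝ (Fin d) → EuclideanSpace ℝ (Fin d))
    (hf : ∀ x, HasGradientAt f (f' x) x) (L : ℝ) (hL : 0 < L)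
    (hLip : ∀ a b, ‖f' a - f' b‖ ≤ L * ‖a - b‖)
    (hconv : ConvexOn ℝ Set.univ h) (η : ℝ) (hη : 0 < η)
    (x xplus : EuclideanSpace ℝ (Fin d))
    (hprox : ∀ w, h xplus + (1 / (2 * η)) * ‖xplus - (x - η • f' x)‖ ^ 2 ≤
      h w + (1 / (2 * η)) * ‖w - (x - η • f' x)‖ ^ 2) :
    f xplus + h xplus ≤ (f x + h x) - (η - L * η ^ 2 / 2) * ‖η⁻¹ • (x - xplus)‖ ^ 2 := by
  set v := xplus - x with hv
  -- continuity of f'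
  have hlipW : LipschitzWith ⟨L, hL.le⟩ f' := by
    apply LipschitzWith.of_dist_le_mul
    intro a b
    rw [dist_eq_norm, dist_eq_norm]; exact hLip a b
  have hcont : Continuous f' := hlipW.continuous
  -- derivative of the line restriction
  have hline : ∀ t : ℝ, HasDerivAt (fun t : ℝ => x + t • v) v t := by
    intro t
    simpa using ((hasDerivAt_id t).smul_const v).const_add x
  have hφ : ∀ t : ℝ, HasDerivAt (fun t : ℝ => f (x + t • v))
      ⟪f' (x + t • v), v⟫_ℝ t := by
    intro t
    have := ((hf (x + t • v)).hasFDerivAt).comp_hasDerivAt t (hline t)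
    exact this
  have hψcont : Continuous fun t : ℝ => ⟪f' (x + t • v), v⟫_ℝ := by
    exact (hcont.comp (by continuity)).inner continuous_const
  have hFTC : (∫ t in (0:ℝ)..1, ⟪f' (x + t • v), v⟫_ℝ) = f xplus - f x := by
    have := intervalIntegral.integral_eq_sub_of_hasDerivAt
      (f := fun t : ℝ => f (x + t • v)) (f' := fun t => ⟪f' (x + t • v), v⟫_ℝ)
      (a := (0:ℝ)) (b := 1) (fun t _ => hφ t)
      (hψcont.intervalIntegrable 0 1)
    simpa [hv] using this
  -- pointwise bound on derivative
  have hbound : ∀ t ∈ Set.Icc (0:ℝ) 1,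
      ⟪f' (x + t • v), v⟫_ℝ ≤ ⟪f' x, v⟫_ℝ + (L * ‖v‖ ^ 2) * t := by
    intro t ht
    have h1 : ⟪f' (x + t • v) - f' x, v⟫_ℝ ≤ ‖f' (x + t • v) - f' x‖ * ‖v‖ :=
      real_inner_le_norm _ _
    have h2 : ‖f' (x + t • v) - f' x‖ ≤ L * (t * ‖v‖) := by
      have := hLip (x + t • v) x
      simpa [norm_smul, abs_of_nonneg ht.1] using this
    have h3 : ⟪f' (x + t • v) - f' x, v⟫_ℝ ≤ L * (t * ‖v‖) * ‖v‖ :=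
      h1.trans (by nlinarith [norm_nonneg v])
    have h4 : ⟪f' (x + t • v) - f' x, v⟫_ℝ = ⟪f' (x + t • v), v⟫_ℝ - ⟪f' x, v⟫_ℝ := by
      rw [inner_sub_left]
    nlinarith [h3, h4]
  -- descent lemma
  have hdescent : f xplus ≤ f x + ⟪f' x, v⟫_ℝ + L / 2 * ‖v‖ ^ 2 := by
    have hmono : (∫ t in (0:ℝ)..1, ⟪f' (x + t • v), v⟫_ℝ)
        ≤ ∫ t in (0:ℝ)..1, (⟪f' x, v⟫_ℝ + (L * ‖v‖ ^ 2) * t) := by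
      apply intervalIntegral.integral_mono_on (by norm_num)
        (hψcont.intervalIntegrable 0 1)
        ((continuous_const.add (continuous_const.mul continuous_id)).intervalIntegrable 0 1)
      exact hbound
    have hval : (∫ t in (0:ℝ)..1, (⟪f' x, v⟫_ℝ + (L * ‖v‖ ^ 2) * t))
        = ⟪f' x, v⟫_ℝ + L / 2 * ‖v‖ ^ 2 := by
      rw [intervalIntegral.integral_add (intervalIntegrable_const)
        ((intervalIntegral.intervalIntegrable_id).const_mul _),
        intervalIntegral.integral_const_mul, integral_id]
      simp; ring
    rw [hFTC] at hmono
    rw [hval] at hmono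
    linarith
  -- prox strong inequality
  set u := x - η • f' x with hu
  set c := 1 / (2 * η) with hc
  have hcpos : 0 < c := by positivity
  have hkey : h xplus - h x ≤ 2 * c * ⟪xplus - u, x - xplus⟫_ℝ := by
    apply le_of_forall_pos_le_add
    intro ε hε
    set t : ℝ := min 1 (ε / (c * ‖x - xplus‖ ^ 2 + 1)) with htdef
    have htpos : 0 < t := lt_min one_pos (by positivity)
    have ht1 : t ≤ 1 := min_le_left _ _
    have htε : c * t * ‖x - xplus‖ ^ 2 ≤ ε := by
      have h1 : t ≤ ε / (c * ‖x - xplus‖ ^ 2 + 1) := min_le_right _ _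
      have h2 : 0 < c * ‖x - xplus‖ ^ 2 + 1 := by positivity
      rw [le_div_iff₀ h2] at h1
      nlinarith [sq_nonneg (‖x - xplus‖), hcpos]
    have hconvpt : h (xplus + t • (x - xplus)) ≤ (1 - t) * h xplus + t * h x := by
      have := hconv.2 (mem_univ xplus) (mem_univ x) (by linarith : (0:ℝ) ≤ 1 - t)
        htpos.le (by ring)
      have heq : (1 - t) • xplus + t • x = xplus + t • (x - xplus) := by
        module
      simpa [heq, smul_eq_mul] using this
    have hqid : ‖xplus + t • (x - xplus) - u‖ ^ 2
        = ‖xplus - u‖ ^ 2 + 2 * (t * ⟪xplus - u, x - xplus⟫_ℝ) + t ^ 2 * ‖x - xplus‖ ^ 2 := by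
      have : xplus + t • (x - xplus) - u = (xplus - u) + t • (x - xplus) := by abel
      rw [this, norm_add_sq_real, real_inner_smul_right, norm_smul]
      rw [mul_pow, Real.norm_eq_abs, sq_abs]
    have hp := hprox (xplus + t • (x - xplus))
    have hstep : t * (h xplus - h x) ≤ 2 * c * (t * ⟪xplus - u, x - xplus⟫_ℝ)
        + c * t ^ 2 * ‖x - xplus‖ ^ 2 := by
      rw [hqid] at hp
      have hexp : c * (‖xplus - u‖ ^ 2 + 2 * (t * ⟪xplus - u, x - xplus⟫_ℝ)
          + t ^ 2 * ‖x - xplus‖ ^ 2)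
          = c * ‖xplus - u‖ ^ 2 + 2 * c * (t * ⟪xplus - u, x - xplus⟫_ℝ)
            + c * t ^ 2 * ‖x - xplus‖ ^ 2 := by ring
      rw [hexp] at hp
      linarith [hp, hconvpt]
    have h5 : t * (2 * c * ⟪xplus - u, x - xplus⟫_ℝ + c * t * ‖x - xplus‖ ^ 2)
        = 2 * c * (t * ⟪xplus - u, x - xplus⟫_ℝ) + c * t ^ 2 * ‖x - xplus‖ ^ 2 := by ring
    have h6 : t * (h xplus - h x)
        ≤ t * (2 * c * ⟪xplus - u, x - xplus⟫_ℝ + c * t * ‖x - xplus‖ ^ 2) := by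
      rw [h5]; exact hstep
    have h7 := (mul_le_mul_iff_right₀ htpos).mp h6
    linarith [htε, h7]
  have hinner : ⟪xplus - u, x - xplus⟫_ℝ
      = -‖x - xplus‖ ^ 2 + η * ⟪f' x, x - xplus⟫_ℝ := by
    have : xplus - u = -(x - xplus) + η • f' x := by rw [hu]; abel
    rw [this, inner_add_left, inner_neg_left, real_inner_smul_left,
      real_inner_self_eq_norm_sq]
  have h2c : 2 * c = 1 / η := by rw [hc]; field_simp
  have hprox_ineq : h xplus ≤ h x - (1 / η) * ‖v‖ ^ 2 - ⟪f' x, v⟫_ℝ := by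
    have hn : ‖x - xplus‖ = ‖v‖ := by rw [hv, norm_sub_rev]
    have hi : ⟪f' x, x - xplus⟫_ℝ = -⟪f' x, v⟫_ℝ := by
      rw [hv, ← inner_neg_right]; congr 1; abel
    have := hkey
    rw [hinner, h2c, hn, hi] at this
    have hη' : η ≠ 0 := hη.ne'
    have heq : 1 / η * (-‖v‖ ^ 2 + η * -⟪f' x, v⟫_ℝ)
        = -((1 / η) * ‖v‖ ^ 2) - ⟪f' x, v⟫_ℝ := by
      field_simp
      ring
    rw [heq] at this
    linarith
  -- combine
  have hnorm : ‖η⁻¹ • (x - xplus)‖ ^ 2 = η⁻¹ ^ 2 * ‖v‖ ^ 2 := by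
    rw [norm_smul, hv, norm_sub_rev, mul_pow, Real.norm_eq_abs, sq_abs]
  rw [hnorm]
  have hrhs : (η - L * η ^ 2 / 2) * (η⁻¹ ^ 2 * ‖v‖ ^ 2) = (1 / η - L / 2) * ‖v‖ ^ 2 := by
    field_simp
  rw [hrhs]
  linarith [hdescent, hprox_ineq]
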